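/- Symmetric matrix elements are preserved by the gauging procedure: if O is a symmetric operator on H_m, ψ₀ ∈ H_m satisfies X(s)ψ₀ = ψ₀ for all s ∈ S, and ψ₁ ∈ H_m is arbitrary, then ⟨G ψ₀, 𝒢[O] (G ψ₁)⟩ = (|S|² / 2^{|I|}) · ⟨ψ₀, O ψ₁⟩, where |I| is the cardinality of I and |S| the cardinality of S. -/

import Mathlib

set_option linter.unusedSectionVars false

noncomputable section

namespace GaugingFractal

/-- The sign `(-1)^t` attached to a `ZMod 2` exponent. -/
def sgn (t : ZMod 2) : ℂ := (-1 : ℂ) ^ t.val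

lemma sgn_mul_self (t : ZMod 2) : sgn t * sgn t = 1 := by
  unfold sgn
  rw [← pow_add, ← two_mul, pow_mul]
  norm_num

lemma zmodfun_add_self {K : Type*} (k : K → ZMod 2) : k + k = 0 := by
  funext j
  exact CharTwo.add_self_eq_zero _

/-- Hilbert space of qubits labelled by a finite set `K`; the computational basis
vector `e_a` is indexed by a pattern `a : K → ZMod 2`. -/
abbrev HS (K : Type*) := EuclideanSpace ℂ (K → ZMod 2)

section Single
variable {K : Type*} [Fintype K] [DecidableEq K]

/-- Pauli X operator: `X(p) e_a = e_{a+p}`. -/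
def XOp (p : K → ZMod 2) : HS K →ₗ[ℂ] HS K where
  toFun ψ := WithLp.toLp 2 (fun a => ψ (a + p))
  map_add' _ _ := rfl
  map_smul' _ _ := rfl

/-- Pauli Z operator: `Z(p) e_a = (-1)^{Σ_i p i * a i} e_a`. -/
def ZOp (p : K → ZMod 2) : HS K →ₗ[ℂ] HS K where
  toFun ψ := WithLp.toLp 2 (fun a => sgn (∑ i, p i * a i) * ψ a)
  map_add' ψ φ := by
    ext a
    exact mul_add _ _ _
  map_smul' c ψ := by
    ext a
    simp only [RingHom.id_apply, PiLp.smul_apply, smul_eq_mul]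
    ring

end Single

section Pair

variable {I J : Type*} [Fintype I] [DecidableEq I] [Fintype J] [DecidableEq J]

/-- Hilbert space of the matter qubits (labelled by `I`) tensored with the gauge
qubits (labelled by `J`): the computational basis vector indexed by `(a, b)`
realizes the tensor product `e_a ⊗ f_b`. -/
abbrev HS2 (I J : Type*) := EuclideanSpace ℂ ((I → ZMod 2) × (J → ZMod 2))

/-- `X(p) ⊗ X_g(q)` on `H_m ⊗ H_g`. -/
def XXOp (p : I → ZMod 2) (q : J → ZMod 2) : HS2 I J →ₗ[ℂ] HS2 I J where
  toFun ψ := WithLp.toLp 2 (fun ab => ψ (ab.1 + p, ab.2 + q))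
  map_add' _ _ := rfl
  map_smul' _ _ := rfl

/-- `X(p) ⊗ Z_g(q)` on `H_m ⊗ H_g`. -/
def XZOp (p : I → ZMod 2) (q : J → ZMod 2) : HS2 I J →ₗ[ℂ] HS2 I J where
  toFun ψ := WithLp.toLp 2 (fun ab => sgn (∑ j, q j * ab.2 j) * ψ (ab.1 + p, ab.2))
  map_add' ψ φ := by
    ext ab
    exact mul_add _ _ _
  map_smul' c ψ := by
    ext ab
    simp only [RingHom.id_apply, PiLp.smul_apply, smul_eq_mul]
    ring

/-- `Z(p) ⊗ X_g(q)` on `H_m ⊗ H_g`. -/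
def ZXOp (p : I → ZMod 2) (q : J → ZMod 2) : HS2 I J →ₗ[ℂ] HS2 I J where
  toFun ψ := WithLp.toLp 2 (fun ab => sgn (∑ i, p i * ab.1 i) * ψ (ab.1, ab.2 + q))
  map_add' ψ φ := by
    ext ab
    exact mul_add _ _ _
  map_smul' c ψ := by
    ext ab
    simp only [RingHom.id_apply, PiLp.smul_apply, smul_eq_mul]
    ring

/-- The flux operator `1 ⊗ Z_g(k)` on `H_m ⊗ H_g`. -/
def IZOp (k : J → ZMod 2) : HS2 I J →ₗ[ℂ] HS2 I J := XZOp 0 k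

variable (A : J → Finset I)

/-- The boundary map `∂ : (I → ZMod 2) → (J → ZMod 2)`, `(∂p)(j) = Σ_{i ∈ A j} p(i)`. -/
def bnd (p : I → ZMod 2) : J → ZMod 2 := fun j => ∑ i ∈ A j, p i

/-- The coboundary map `δ : (J → ZMod 2) → (I → ZMod 2)`, `(δk)(i) = Σ_{j : i ∈ A j} k(j)`. -/
def cobnd (k : J → ZMod 2) : I → ZMod 2 :=
  fun i => ∑ j ∈ Finset.univ.filter (fun j => i ∈ A j), k j

/-- The indicator pattern `χ_i` of a matter qubit `i`. -/
def chi (i : I) : I → ZMod 2 := Pi.single i 1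

/-- The indicator pattern `κ_j` of a gauge qubit `j`. -/
def kap (j : J) : J → ZMod 2 := Pi.single j 1

/-- The local gauge constraint `C_i = X(χ_i) ⊗ X_g(∂χ_i)`. -/
def C (i : I) : HS2 I J →ₗ[ℂ] HS2 I J := XXOp (chi i) (bnd A (chi i))

lemma XXOp_mul (p p' : I → ZMod 2) (q q' : J → ZMod 2) :
    (XXOp p q : Module.End ℂ (HS2 I J)) * XXOp p' q' = XXOp (p + p') (q + q') := by
  apply LinearMap.ext
  intro ψ
  ext ab
  show ψ (ab.1 + p + p', ab.2 + q + q') = ψ (ab.1 + (p + p'), ab.2 + (q + q'))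
  rw [add_assoc, add_assoc]

lemma C_commute (i i' : I) : Commute (C A i) (C A i') := by
  show C A i * C A i' = C A i' * C A i
  unfold C
  rw [XXOp_mul, XXOp_mul, add_comm (chi i) (chi i'),
    add_comm (bnd A (chi i)) (bnd A (chi i'))]

/-- The product of gauge constraints `C^s = Π_{i : s i = 1} C_i`. -/
def Cprod (s : I → ZMod 2) : Module.End ℂ (HS2 I J) :=
  (Finset.univ.filter fun i => s i = 1).noncommProd (fun i => C A i)
    (fun i _ j _ _ => C_commute A i j)

lemma Chalf_commute (i i' : I) :
    Commute ((2 : ℂ)⁻¹ • (1 + C A i)) ((2 : ℂ)⁻¹ • (1 + C A i')) := by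
  have h : Commute (1 + C A i) (1 + C A i') :=
    (Commute.one_left _).add_left ((Commute.one_right _).add_right (C_commute A i i'))
  exact (h.smul_left _).smul_right _

/-- The projector `P = Π_{i ∈ I} (1 + C_i)/2` onto the gauge invariant subspace. -/
def Pproj : Module.End ℂ (HS2 I J) :=
  Finset.univ.noncommProd (fun i => (2 : ℂ)⁻¹ • (1 + C A i))
    (fun i _ j _ _ => Chalf_commute A i j)

/-- `ψ ↦ ψ ⊗ f_0`, the inclusion `1_m ⊗ |f_0⟩ : H_m → H_m ⊗ H_g` determined by the
all-zeros gauge basis vector `f_0`. -/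
def incl : HS I →ₗ[ℂ] HS2 I J where
  toFun ψ := WithLp.toLp 2 (fun ab => if ab.2 = 0 then ψ ab.1 else 0)
  map_add' ψ φ := by
    ext ab
    by_cases h : ab.2 = 0 <;> simp [h]
  map_smul' c ψ := by
    ext ab
    by_cases h : ab.2 = 0 <;> simp [h]

/-- The compression `1_m ⊗ ⟨f_0| : H_m ⊗ H_g → H_m`. -/
def res0 : HS2 I J →ₗ[ℂ] HS I where
  toFun ψ := WithLp.toLp 2 (fun a => ψ (a, 0))
  map_add' _ _ := rfl
  map_smul' _ _ := rfl

/-- The state gauging map `G ψ = P (ψ ⊗ f_0)`. -/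
def Gmap : HS I →ₗ[ℂ] HS2 I J := Pproj A ∘ₗ incl

/-- The operator gauging map `𝒢[O] = Σ_{s : I → ZMod 2} C^s (O ⊗ |f_0⟩⟨f_0|) C^s`,
where `O ⊗ |f_0⟩⟨f_0| = incl ∘ O ∘ res0`. -/
def gaugeOp (O : Module.End ℂ (HS I)) : Module.End ℂ (HS2 I J) :=
  ∑ s : I → ZMod 2, Cprod A s * (incl ∘ₗ O ∘ₗ res0) * Cprod A s

/-- The joint fixed subspace `{v | C_i v = v for all i}` of the gauge constraints. -/
def fixedSub : Submodule ℂ (HS2 I J) where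
  carrier := {v | ∀ i, C A i v = v}
  add_mem' := by
    intro x y hx hy i
    rw [map_add, hx i, hy i]
  zero_mem' := by
    intro i
    simp
  smul_mem' := by
    intro c x hx i
    rw [map_smul, hx i]

/-- The symmetric subspace `{ψ | X(s) ψ = ψ for all s with ∂s = 0}` of the matter space. -/
def symmSub : Submodule ℂ (HS I) where
  carrier := {ψ | ∀ s, bnd A s = 0 → XOp s ψ = ψ}
  add_mem' := by
    intro x y hx hy s hs
    rw [map_add, hx s hs, hy s hs]
  zero_mem' := by
    intro s hs
    simp
  smul_mem' := by
    intro c x hx s hs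
    rw [map_smul, hx s hs]

/-- The cluster stabilizer `K_i = X(χ_i) ⊗ Z_g(∂χ_i)`. -/
def Kst (i : I) : Module.End ℂ (HS2 I J) := XZOp (chi i) (bnd A (chi i))

/-- The cluster stabilizer `L_j = Z(δκ_j) ⊗ X_g(κ_j)`. -/
def Lst (j : J) : Module.End ℂ (HS2 I J) := ZXOp (cobnd A (kap j)) (kap j)

/-- The disentangling circuit of controlled-X gates from each matter qubit to its
adjacent gauge qubits: `V (e_a ⊗ f_b) = e_a ⊗ f_{b + ∂a}`. -/
def Vequiv : HS2 I J ≃ₗ[ℂ] HS2 I J where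
  toFun ψ := WithLp.toLp 2 (fun ab => ψ (ab.1, ab.2 + bnd A ab.1))
  invFun ψ := WithLp.toLp 2 (fun ab => ψ (ab.1, ab.2 + bnd A ab.1))
  map_add' _ _ := rfl
  map_smul' _ _ := rfl
  left_inv ψ := by
    ext ab
    show ψ (ab.1, ab.2 + bnd A ab.1 + bnd A ab.1) = ψ ab
    rw [add_assoc, zmodfun_add_self, add_zero]
  right_inv ψ := by
    ext ab
    show ψ (ab.1, ab.2 + bnd A ab.1 + bnd A ab.1) = ψ ab
    rw [add_assoc, zmodfun_add_self, add_zero]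

/-- The circuit of controlled-Z gates along the edges of the bipartite graph:
`U (e_a ⊗ f_b) = (-1)^{Σ_j (∂a)(j)·b(j)} e_a ⊗ f_b`. -/
def Uequiv : HS2 I J ≃ₗ[ℂ] HS2 I J where
  toFun ψ := WithLp.toLp 2 (fun ab => sgn (∑ j, bnd A ab.1 j * ab.2 j) * ψ ab)
  invFun ψ := WithLp.toLp 2 (fun ab => sgn (∑ j, bnd A ab.1 j * ab.2 j) * ψ ab)
  map_add' ψ φ := by
    ext ab
    exact mul_add _ _ _
  map_smul' c ψ := by
    ext ab
    simp only [RingHom.id_apply, PiLp.smul_apply, smul_eq_mul]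
    ring
  left_inv ψ := by
    ext ab
    show sgn _ * (sgn _ * ψ ab) = ψ ab
    rw [← mul_assoc, sgn_mul_self, one_mul]
  right_inv ψ := by
    ext ab
    show sgn _ * (sgn _ * ψ ab) = ψ ab
    rw [← mul_assoc, sgn_mul_self, one_mul]



/-! ### Auxiliary lemmas for Statement 6 -/

lemma add_eq_zero_iff' {K : Type*} (k k' : K → ZMod 2) : k + k' = 0 ↔ k = k' := by
  constructor
  · intro h
    have h2 : k + k' + k' = 0 + k' := by rw [h]
    rw [add_assoc, zmodfun_add_self, add_zero, zero_add] at h2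
    exact h2
  · rintro rfl
    exact zmodfun_add_self k

lemma bnd_zero : bnd A 0 = 0 := by
  funext j; simp [bnd]

lemma bnd_add (p q : I → ZMod 2) : bnd A (p + q) = bnd A p + bnd A q := by
  funext j
  simp [bnd, Finset.sum_add_distrib]

lemma XXOp_zero : (XXOp 0 0 : Module.End ℂ (HS2 I J)) = 1 := by
  apply LinearMap.ext
  intro ψ
  ext ab
  show ψ (ab.1 + 0, ab.2 + 0) = ψ ab
  rw [add_zero, add_zero]

lemma sum_chi_apply (T : Finset I) (i : I) :
    (∑ i' ∈ T, chi i') i = if i ∈ T then (1 : ZMod 2) else 0 := by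
  rw [Finset.sum_apply]
  simp only [chi, Pi.single_apply]
  exact Finset.sum_ite_eq T i (fun _ => 1)

lemma sum_chi (s : I → ZMod 2) :
    ∑ i ∈ Finset.univ.filter (fun i => s i = 1), chi i = s := by
  funext i
  rw [sum_chi_apply]
  by_cases h : s i = 1
  · simp [h]
  · have h0 : s i = 0 := by
      have := (show ∀ x : ZMod 2, x = 0 ∨ x = 1 by decide) (s i)
      tauto
    simp [h, h0]

lemma noncommProd_C (F : Finset I) :
    F.noncommProd (fun i => C A i) (fun i _ j _ _ => C_commute A i j)
      = XXOp (∑ i ∈ F, chi i) (bnd A (∑ i ∈ F, chi i)) := by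
  induction F using Finset.induction_on with
  | empty => erw [Finset.noncommProd_empty, Finset.sum_empty, bnd_zero, XXOp_zero]
  | @insert a F ha ih =>
    erw [Finset.noncommProd_insert_of_notMem _ _ _ _ ha, ih, Finset.sum_insert ha]
    simp only [C]
    rw [XXOp_mul, ← bnd_add]

lemma Cprod_eq (s : I → ZMod 2) : Cprod A s = XXOp s (bnd A s) := by
  rw [Cprod, noncommProd_C, sum_chi]

lemma noncommProd_half (F : Finset I) :
    F.noncommProd (fun i => (2 : ℂ)⁻¹ • (1 + C A i)) (fun i _ j _ _ => Chalf_commute A i j)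
      = ((2 : ℂ)⁻¹) ^ F.card •
          ∑ T ∈ F.powerset, XXOp (∑ i ∈ T, chi i) (bnd A (∑ i ∈ T, chi i)) := by
  induction F using Finset.induction_on with
  | empty =>
    erw [Finset.noncommProd_empty, Finset.powerset_empty, Finset.sum_singleton,
      Finset.sum_empty, bnd_zero, XXOp_zero, Finset.card_empty, pow_zero, one_smul]
  | @insert a F ha ih =>
    erw [Finset.noncommProd_insert_of_notMem _ _ _ _ ha, ih,
      Finset.sum_powerset_insert ha, Finset.card_insert_of_notMem ha, pow_succ,
      smul_mul_smul_comm]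
    congr 1
    · ring
    rw [add_mul, one_mul, Finset.mul_sum]
    congr 1
    apply Finset.sum_congr rfl
    intro T hT
    have haT : a ∉ T := fun hmem => ha (Finset.mem_powerset.mp hT hmem)
    simp only [C]
    rw [XXOp_mul, ← bnd_add, ← Finset.sum_insert haT]

lemma sumchi_bijective :
    Function.Bijective (fun T : Finset I => ∑ i ∈ T, chi i) := by
  apply Function.bijective_iff_has_inverse.mpr
  refine ⟨fun s => Finset.univ.filter (fun i => s i = 1), ?_, ?_⟩
  · intro T
    ext i
    simp only [Finset.mem_filter, Finset.mem_univ, true_and, sum_chi_apply]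
    by_cases h : i ∈ T
    · simp [h]
    · simp only [h, if_false, iff_false]
      decide
  · intro s
    exact sum_chi s

lemma Pproj_eq :
    Pproj A = ((2 : ℂ)⁻¹) ^ (Fintype.card I) • ∑ s : I → ZMod 2, XXOp s (bnd A s) := by
  rw [Pproj, noncommProd_half, Finset.card_univ, Finset.powerset_univ]
  congr 1
  exact Fintype.sum_bijective _ sumchi_bijective _ _ (fun T => rfl)

lemma XOp_XOp (p q : I → ZMod 2) (ψ : HS I) : XOp p (XOp q ψ) = XOp (p + q) ψ := by
  ext a
  show ψ (a + p + q) = ψ (a + (p + q))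
  rw [add_assoc]

lemma add_add_self (a p : I → ZMod 2) : a + p + p = a := by
  rw [add_assoc, zmodfun_add_self, add_zero]

lemma inner_XOp (p : I → ZMod 2) (v w : HS I) :
    inner (𝕜 := ℂ) (XOp p v) w = inner (𝕜 := ℂ) v (XOp p w) := by
  simp only [PiLp.inner_apply, RCLike.inner_apply']
  have hbij : Function.Bijective (fun a : I → ZMod 2 => a + p) :=
    Function.Involutive.bijective (fun a => add_add_self a p)
  refine Fintype.sum_bijective (fun a => a + p) hbij _ _ ?_
  intro a
  show (starRingEnd ℂ) (v (a + p)) * w a = (starRingEnd ℂ) (v (a + p)) * w (a + p + p)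
  rw [add_add_self]

lemma hXX (p p' : I → ZMod 2) (q q' : J → ZMod 2) (v : HS2 I J) :
    XXOp p q (XXOp p' q' v) = XXOp (p + p') (q + q') v :=
  LinearMap.congr_fun (XXOp_mul p p' q q') v

lemma res0_XX (t : I → ZMod 2) (q : J → ZMod 2) (φ : HS I) :
    res0 (XXOp t q (incl φ)) = if q = 0 then XOp t φ else (0 : HS I) := by
  by_cases h : q = 0
  · rw [if_pos h]
    ext a
    show (if (0 : J → ZMod 2) + q = 0 then φ (a + t) else 0) = φ (a + t)
    rw [zero_add, if_pos h]
  · rw [if_neg h]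
    ext a
    show (if (0 : J → ZMod 2) + q = 0 then φ (a + t) else 0) = 0
    rw [zero_add, if_neg h]

lemma inner_XX_incl (u s : I → ZMod 2) (q r : J → ZMod 2) (φ₀ φ₁ : HS I) :
    inner (𝕜 := ℂ) (XXOp u q (incl φ₀)) (XXOp s r (incl φ₁))
      = if q = r then inner (𝕜 := ℂ) φ₀ (XOp (u + s) φ₁) else 0 := by
  simp only [PiLp.inner_apply, RCLike.inner_apply']
  by_cases h : q = r
  · subst h
    rw [if_pos rfl, Fintype.sum_prod_type]
    have hsum : ∀ a : I → ZMod 2,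
        (∑ b : J → ZMod 2,
            (starRingEnd ℂ) (XXOp u q (incl φ₀) (a, b)) * XXOp s q (incl φ₁) (a, b))
          = (starRingEnd ℂ) (φ₀ (a + u)) * φ₁ (a + s) := by
      intro a
      rw [Finset.sum_eq_single q]
      · show (starRingEnd ℂ) (if q + q = 0 then φ₀ (a + u) else 0) *
            (if q + q = 0 then φ₁ (a + s) else 0) = _
        rw [zmodfun_add_self, if_pos rfl, if_pos rfl]
      · intro b _ hb
        show (starRingEnd ℂ) (if b + q = 0 then φ₀ (a + u) else 0) *
            (if b + q = 0 then φ₁ (a + s) else 0) = 0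
        rw [if_neg, map_zero, zero_mul]
        intro hc
        exact hb ((add_eq_zero_iff' b q).mp hc)
      · intro hq
        exact absurd (Finset.mem_univ q) hq
    rw [Finset.sum_congr rfl (fun a _ => hsum a)]
    have hbij : Function.Bijective (fun a : I → ZMod 2 => a + u) :=
      Function.Involutive.bijective (fun a => add_add_self a u)
    refine (Fintype.sum_bijective (fun a => a + u) hbij _ _ ?_).symm
    intro x
    show (starRingEnd ℂ) (φ₀ x) * φ₁ (x + (u + s))
        = (starRingEnd ℂ) (φ₀ (x + u + u)) * φ₁ (x + u + s)
    rw [add_add_self, ← add_assoc]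
  · rw [if_neg h]
    apply Finset.sum_eq_zero
    intro x _
    show (starRingEnd ℂ) (if x.2 + q = 0 then φ₀ (x.1 + u) else 0) *
        (if x.2 + r = 0 then φ₁ (x.1 + s) else 0) = 0
    by_cases h1 : x.2 + q = 0
    · have hr2 : ¬ x.2 + r = 0 := fun h2 =>
        h (((add_eq_zero_iff' _ _).mp h1).symm.trans ((add_eq_zero_iff' _ _).mp h2))
      rw [if_neg hr2, mul_zero]
    · rw [if_neg h1, map_zero, zero_mul]

lemma inner_sym (O : Module.End ℂ (HS I))
    (hO : ∀ s : I → ZMod 2, bnd A s = 0 → O * XOp s = XOp s * O)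
    (ψ₀ ψ₁ : HS I) (hψ₀ : ∀ s : I → ZMod 2, bnd A s = 0 → XOp s ψ₀ = ψ₀)
    (r w : I → ZMod 2) (hr : bnd A r = 0) (hw : bnd A w = 0) :
    inner (𝕜 := ℂ) ψ₀ (XOp r (O (XOp w ψ₁))) = inner (𝕜 := ℂ) ψ₀ (O ψ₁) := by
  rw [← inner_XOp, hψ₀ r hr]
  have hOw : O (XOp w ψ₁) = XOp w (O ψ₁) := LinearMap.congr_fun (hO w hw) ψ₁
  rw [hOw, ← inner_XOp, hψ₀ w hw]

lemma card_shift (s : I → ZMod 2) :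
    (Finset.univ.filter fun t : I → ZMod 2 => bnd A (s + t) = 0).card
      = (Finset.univ.filter fun t : I → ZMod 2 => bnd A t = 0).card := by
  apply Finset.card_bij' (fun t _ => s + t) (fun t _ => s + t)
  · intro t ht
    simp only [Finset.mem_filter, Finset.mem_univ, true_and] at ht ⊢
    exact ht
  · intro t ht
    simp only [Finset.mem_filter, Finset.mem_univ, true_and] at ht ⊢
    rw [← add_assoc, zmodfun_add_self, zero_add]
    exact ht
  · intro t _
    rw [← add_assoc, zmodfun_add_self, zero_add]
  · intro t _
    rw [← add_assoc, zmodfun_add_self, zero_add]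

lemma sum_shift_ite (v : I → ZMod 2) (x : ℂ) :
    (∑ t : I → ZMod 2, if bnd A (v + t) = 0 then x else 0)
      = ((Finset.univ.filter fun t : I → ZMod 2 => bnd A t = 0).card : ℂ) * x := by
  rw [← Finset.sum_filter, Finset.sum_const, card_shift, nsmul_eq_mul]

/-- Symmetric matrix elements are preserved by gauging:
`⟨G ψ₀, 𝒢[O] (G ψ₁)⟩ = (|S|² / 2^{|I|}) · ⟨ψ₀, O ψ₁⟩` for `ψ₀` symmetric. -/
theorem gauging_preserves_matrix_elements (A : J → Finset I) (O : Module.End ℂ (HS I))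
    (hO : ∀ s : I → ZMod 2, bnd A s = 0 → O * XOp s = XOp s * O)
    (ψ₀ ψ₁ : HS I) (hψ₀ : ∀ s : I → ZMod 2, bnd A s = 0 → XOp s ψ₀ = ψ₀) :
    inner (𝕜 := ℂ) (Gmap A ψ₀) (gaugeOp A O (Gmap A ψ₁))
      = ((Nat.card {s : I → ZMod 2 // bnd A s = 0} : ℂ) ^ 2 / 2 ^ Fintype.card I) *
          inner (𝕜 := ℂ) ψ₀ (O ψ₁) := by
  classical
  set nI := Fintype.card I with hnI
  set c : ℂ := ((2 : ℂ)⁻¹) ^ nI with hc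
  set nS := (Finset.univ.filter fun t : I → ZMod 2 => bnd A t = 0).card with hnS
  set K : ℂ := inner (𝕜 := ℂ) ψ₀ (O ψ₁) with hK
  have hG : ∀ ψ : HS I,
      Gmap A ψ = c • ∑ u : I → ZMod 2, XXOp u (bnd A u) (incl ψ) := by
    intro ψ
    show Pproj A (incl ψ) = _
    rw [Pproj_eq, LinearMap.smul_apply, LinearMap.sum_apply]
  have hterm : ∀ s : I → ZMod 2,
      ((Cprod A s * (incl ∘ₗ O ∘ₗ res0) * Cprod A s : Module.End ℂ (HS2 I J)) (Gmap A ψ₁))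
        = c • ∑ t : I → ZMod 2,
            XXOp s (bnd A s)
              (incl (O (if bnd A (s + t) = 0 then XOp (s + t) ψ₁ else 0))) := by
    intro s
    rw [hG ψ₁]
    simp only [Module.End.mul_apply, LinearMap.comp_apply, map_smul, map_sum, Cprod_eq]
    congr 1
    apply Finset.sum_congr rfl
    intro t _
    rw [hXX, ← bnd_add, res0_XX]
  have hKet : gaugeOp A O (Gmap A ψ₁)
      = ∑ s : I → ZMod 2, c • ∑ t : I → ZMod 2,
          XXOp s (bnd A s)
            (incl (O (if bnd A (s + t) = 0 then XOp (s + t) ψ₁ else 0))) := by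
    rw [gaugeOp, LinearMap.sum_apply]
    exact Finset.sum_congr rfl (fun s _ => hterm s)
  have hinner : ∀ u s t : I → ZMod 2,
      inner (𝕜 := ℂ) (XXOp u (bnd A u) (incl ψ₀))
        (XXOp s (bnd A s) (incl (O (if bnd A (s + t) = 0 then XOp (s + t) ψ₁ else 0))))
        = if bnd A (s + t) = 0 then (if bnd A (u + s) = 0 then K else 0) else 0 := by
    intro u s t
    rw [inner_XX_incl]
    by_cases h1 : bnd A (s + t) = 0
    · simp only [if_pos h1]
      by_cases h2 : bnd A u = bnd A s
      · have h2' : bnd A (u + s) = 0 := by rw [bnd_add, h2, zmodfun_add_self]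
        simp only [if_pos h2, if_pos h2']
        exact inner_sym A O hO ψ₀ ψ₁ hψ₀ (u + s) (s + t) h2' h1
      · have h2' : bnd A (u + s) ≠ 0 := by
          intro hcon
          rw [bnd_add] at hcon
          exact h2 ((add_eq_zero_iff' _ _).mp hcon)
        simp only [if_neg h2, if_neg h2']
    · simp only [if_neg h1]
      simp
  rw [hG ψ₀, hKet, inner_smul_left]
  simp only [sum_inner, inner_sum, inner_smul_right, hinner]
  have hin2 : ∀ s : I → ZMod 2,
      (∑ t : I → ZMod 2, ∑ u : I → ZMod 2,
          if bnd A (s + t) = 0 then (if bnd A (u + s) = 0 then K else 0) else 0)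
        = (nS : ℂ) * ((nS : ℂ) * K) := by
    intro s
    have e1 : ∀ t : I → ZMod 2,
        (∑ u : I → ZMod 2,
            if bnd A (s + t) = 0 then (if bnd A (u + s) = 0 then K else 0) else 0)
          = if bnd A (s + t) = 0 then (nS : ℂ) * K else 0 := by
      intro t
      by_cases h1 : bnd A (s + t) = 0
      · simp only [if_pos h1]
        have e2 : (∑ u : I → ZMod 2, if bnd A (u + s) = 0 then K else 0)
            = ∑ u : I → ZMod 2, if bnd A (s + u) = 0 then K else 0 :=
          Finset.sum_congr rfl (fun u _ => by rw [add_comm u s])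
        rw [e2, sum_shift_ite A s K]
      · simp only [if_neg h1, Finset.sum_const, smul_zero]
    rw [Finset.sum_congr rfl (fun t _ => e1 t), sum_shift_ite A s ((nS : ℂ) * K)]
  rw [Finset.sum_congr rfl (fun s _ => by rw [hin2 s])]
  rw [Finset.sum_const, Finset.card_univ, Fintype.card_fun, ZMod.card, nsmul_eq_mul]
  have hconj : (starRingEnd ℂ) c = c := by
    rw [hc, map_pow, map_inv₀, map_ofNat]
  rw [hconj]
  have hNS : (Nat.card {s : I → ZMod 2 // bnd A s = 0} : ℂ) = (nS : ℂ) := by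
    rw [Nat.card_eq_fintype_card, Fintype.card_subtype]
  rw [hNS]
  have h2 : ((2 : ℂ) ^ nI) ≠ 0 := pow_ne_zero _ two_ne_zero
  rw [hc, inv_pow]
  push_cast
  field_simp
  ring
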